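/- Let L be a finite-dimensional complex Lie algebra with a nondegenerate symmetric ℂ-bilinear form B, and let g be a real slice of (L,B). Then there exists a Cartan involution of Lie algebras θ : g → g of the restriction of B to g if and only if there exists a compact real form u of (L,B). -/

import Mathlib

/-!
Setup: a finite-dimensional complex Lie algebra `L` with a nondegenerate symmetric
`ℂ`-bilinear form `B` (a "holomorphic inner product"), viewed also as a real Lie algebra.
-/

variable {L : Type*} [LieRing L] [LieAlgebra ℂ L]

/-- A complex Lie algebra is in particular a real Lie algebra. -/
noncomputable instance instLieAlgebraRealOfComplex : LieAlgebra ℝ L :=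
  { (inferInstance : Module ℝ L) with
    lie_smul := fun t x y => by
      rw [show t • y = (t : ℂ) • y from rfl, lie_smul,
        show (t : ℂ) • ⁅x, y⁆ = t • ⁅x, y⁆ from rfl] }

/-- `g` is a real form of the complex Lie algebra `L`:
`g ∩ i • g = {0}` and `g + i • g = L`. -/
def IsRealForm (g : LieSubalgebra ℝ L) : Prop :=
  (∀ x ∈ g, ∀ y ∈ g, x = Complex.I • y → x = 0) ∧
  (∀ z : L, ∃ x ∈ g, ∃ y ∈ g, z = x + Complex.I • y)

/-- `g` is a real slice of `(L, B)`: a real form of `L` on which `B` is real-valued. -/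
def IsRealSlice (B : LinearMap.BilinForm ℂ L) (g : LieSubalgebra ℝ L) : Prop :=
  IsRealForm g ∧ ∀ x ∈ g, ∀ y ∈ g, (B x y).im = 0

/-- A compact real form of `(L, B)`: a real slice on which `B` is positive definite. -/
def IsCompactRealForm (B : LinearMap.BilinForm ℂ L) (u : LieSubalgebra ℝ L) : Prop :=
  IsRealSlice B u ∧ ∀ x ∈ u, x ≠ 0 → 0 < (B x x).re

/-- A Cartan involution of the metric `B|g`: an `ℝ`-linear involution `θ` of `g` such that
`(x, y) ↦ B x (θ y)` is a positive-definite (real-valued, symmetric) inner product on `g`. -/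
def IsCartanInvolutionOfMetric (B : LinearMap.BilinForm ℂ L) (g : LieSubalgebra ℝ L)
    (θ : ↥g →ₗ[ℝ] ↥g) : Prop :=
  (∀ x, θ (θ x) = x) ∧
  (∀ x y : ↥g, B (θ x : L) (y : L) = B (x : L) (θ y : L)) ∧
  (∀ x : ↥g, x ≠ 0 → 0 < (B (x : L) (θ x : L)).re)

/-- A Cartan involution of Lie algebras of the metric `B|g`: a Cartan involution of the
metric which is moreover a Lie algebra automorphism of `g`. -/
def IsCartanInvolutionOfLieAlgebras (B : LinearMap.BilinForm ℂ L) (g : LieSubalgebra ℝ L)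
    (θ : ↥g →ₗ[ℝ] ↥g) : Prop :=
  IsCartanInvolutionOfMetric B g θ ∧ ∀ x y : ↥g, θ ⁅x, y⁆ = ⁅θ x, θ y⁆

namespace CartanAux

/-- The ℝ-linear map `(x, y) ↦ x + I • y` from `g × g` to `L`. -/
noncomputable def addI (g : LieSubalgebra ℝ L) : (↥g × ↥g) →ₗ[ℝ] L :=
  g.toSubmodule.subtype ∘ₗ LinearMap.fst ℝ ↥g ↥g +
    (((LinearMap.lsmul ℂ L Complex.I).restrictScalars ℝ) ∘ₗ g.toSubmodule.subtype) ∘ₗ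
      LinearMap.snd ℝ ↥g ↥g

@[simp] lemma addI_apply (g : LieSubalgebra ℝ L) (p : ↥g × ↥g) :
    addI g p = (p.1 : L) + Complex.I • (p.2 : L) := rfl

lemma addI_bijective {g : LieSubalgebra ℝ L} (hg : IsRealForm g) :
    Function.Bijective (addI g) := by
  constructor
  · rw [← LinearMap.ker_eq_bot, LinearMap.ker_eq_bot']
    rintro ⟨x, y⟩ h
    simp only [addI_apply] at h
    have hx : (x : L) = Complex.I • ((-y : ↥g) : L) := by
      have h2 : ((-y : ↥g) : L) = -(y : L) := by simp
      rw [h2, smul_neg]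
      exact eq_neg_of_add_eq_zero_left h
    have hx0 : (x : L) = 0 := hg.1 x x.2 _ (-y : ↥g).2 hx
    have hy0 : (y : L) = 0 := by
      have : Complex.I • (y : L) = 0 := by rw [hx0] at h; simpa using h
      simpa [Complex.I_ne_zero] using smul_eq_zero.mp this
    ext <;> simp [hx0, hy0]
  · intro z
    obtain ⟨x, hx, y, hy, rfl⟩ := hg.2 z
    exact ⟨(⟨x, hx⟩, ⟨y, hy⟩), rfl⟩

end CartanAux

namespace CartanAux2
open CartanAux
variable {g : LieSubalgebra ℝ L}

/-- The conjugation of `L` with respect to a real form `g`. -/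
noncomputable def conjL (g : LieSubalgebra ℝ L) (hg : IsRealForm g) : L →ₗ[ℝ] L :=
  addI g ∘ₗ (LinearMap.prodMap LinearMap.id (-LinearMap.id)) ∘ₗ
    (LinearEquiv.ofBijective (addI g) (addI_bijective hg)).symm.toLinearMap

lemma conjL_key (hg : IsRealForm g) (x y : ↥g) :
    conjL g hg ((x : L) + Complex.I • (y : L)) = (x : L) - Complex.I • (y : L) := by
  have h1 : (LinearEquiv.ofBijective (addI g) (addI_bijective hg)).symm
      ((x : L) + Complex.I • (y : L)) = (x, y) := by
    have e : ((x : L) + Complex.I • (y : L))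
        = (LinearEquiv.ofBijective (addI g) (addI_bijective hg)) (x, y) := rfl
    rw [e, LinearEquiv.symm_apply_apply]
  simp only [conjL, LinearMap.comp_apply, LinearEquiv.coe_coe, h1]
  simp [sub_eq_add_neg]

lemma exists_decomp (hg : IsRealForm g) (z : L) :
    ∃ x y : ↥g, z = (x : L) + Complex.I • (y : L) := by
  obtain ⟨x, hx, y, hy, rfl⟩ := hg.2 z
  exact ⟨⟨x, hx⟩, ⟨y, hy⟩, rfl⟩

lemma conjL_mem (hg : IsRealForm g) {z : L} (hz : z ∈ g) : conjL g hg z = z := by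
  have := conjL_key hg ⟨z, hz⟩ 0
  simpa using this

lemma conjL_invol (hg : IsRealForm g) (z : L) : conjL g hg (conjL g hg z) = z := by
  obtain ⟨x, y, rfl⟩ := exists_decomp hg z
  rw [conjL_key hg, sub_eq_add_neg, show -(Complex.I • (y:L)) = Complex.I • ((-y : ↥g) : L) by simp,
    conjL_key hg]
  simp [sub_eq_add_neg]

lemma conjL_fix (hg : IsRealForm g) {z : L} (hz : conjL g hg z = z) : z ∈ g := by
  obtain ⟨x, y, rfl⟩ := exists_decomp hg z
  rw [conjL_key hg] at hz
  have h2' : -(Complex.I • (y : L)) = Complex.I • (y : L) := by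
    apply add_left_cancel (a := (x : L))
    rw [← sub_eq_add_neg]
    exact hz
  have h2 : Complex.I • (y : L) + Complex.I • (y : L) = 0 := by
    nth_rewrite 1 [← h2']
    exact neg_add_cancel _
  have h3 : Complex.I • ((y + y : ↥g) : L) = 0 := by
    push_cast [smul_add]; exact h2
  have h4 : ((y + y : ↥g) : L) = 0 := by
    simpa [Complex.I_ne_zero] using smul_eq_zero.mp h3
  have h5 : (y : L) = 0 := by
    have : (2:ℝ) • (y:L) = 0 := by rw [two_smul]; exact_mod_cast h4
    simpa using smul_eq_zero.mp this
  simp only [h5, smul_zero, add_zero]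
  exact x.2

lemma conjL_smulI (hg : IsRealForm g) (z : L) :
    conjL g hg (Complex.I • z) = -(Complex.I • conjL g hg z) := by
  obtain ⟨x, y, rfl⟩ := exists_decomp hg z
  have h1 : Complex.I • ((x : L) + Complex.I • (y : L))
      = ((-y : ↥g) : L) + Complex.I • (x : L) := by
    rw [smul_add, smul_smul, Complex.I_mul_I, neg_one_smul]
    push_cast
    exact add_comm _ _
  rw [h1, conjL_key hg, conjL_key hg, smul_sub, smul_smul, Complex.I_mul_I, neg_one_smul,
    sub_neg_eq_add, neg_add]
  push_cast
  abel

lemma real_smul_eq (r : ℝ) (z : L) : (r : ℂ) • z = r • z := rfl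

lemma conjL_smul (hg : IsRealForm g) (c : ℂ) (z : L) :
    conjL g hg (c • z) = (starRingEnd ℂ c) • conjL g hg z := by
  have e1 : c • z = c.re • z + c.im • Complex.I • z := by
    rw [← real_smul_eq, ← real_smul_eq, smul_smul, ← add_smul, Complex.re_add_im]
  rw [e1, map_add, map_smul, map_smul, conjL_smulI hg,
    show (starRingEnd ℂ c) = (c.re : ℂ) - (c.im : ℂ) * Complex.I by
      simp [Complex.ext_iff],
    sub_smul, mul_smul, real_smul_eq, real_smul_eq, smul_neg, sub_eq_add_neg]

lemma conjL_bracket (hg : IsRealForm g) (z w : L) :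
    conjL g hg ⁅z, w⁆ = ⁅conjL g hg z, conjL g hg w⁆ := by
  obtain ⟨x, y, rfl⟩ := exists_decomp hg z
  obtain ⟨x', y', rfl⟩ := exists_decomp hg w
  have expand : ∀ a b a' b' : ↥g,
      (⁅(a:L) + Complex.I • (b:L), (a':L) + Complex.I • (b':L)⁆ : L)
      = ((⁅a, a'⁆ - ⁅b, b'⁆ : ↥g) : L) + Complex.I • ((⁅a, b'⁆ + ⁅b, a'⁆ : ↥g) : L) := by
    intro a b a' b'
    push_cast
    simp only [add_lie, lie_add, smul_lie, lie_smul, smul_smul, Complex.I_mul_I,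
      neg_one_smul, smul_add]
    abel
  have e1 : ∀ a b : ↥g, (a : L) - Complex.I • (b : L) = (a : L) + Complex.I • ((-b : ↥g) : L) := by
    intro a b
    push_cast
    rw [smul_neg, sub_eq_add_neg]
  rw [expand, conjL_key hg, conjL_key hg, conjL_key hg, e1 x y, e1 x' y', expand]
  push_cast [lie_neg, neg_lie]
  simp only [smul_add, smul_neg, smul_sub]
  abel

lemma conjL_conjB (Bf : LinearMap.BilinForm ℂ L) (hs : ∀ x ∈ g, ∀ y ∈ g, (Bf x y).im = 0)
    (hg : IsRealForm g) (z w : L) :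
    Bf (conjL g hg z) (conjL g hg w) = starRingEnd ℂ (Bf z w) := by
  obtain ⟨x, y, rfl⟩ := exists_decomp hg z
  obtain ⟨x', y', rfl⟩ := exists_decomp hg w
  have ex : ∀ (a b c d : L) (s t : ℂ), Bf (a + s • b) (c + t • d)
      = Bf a c + t * Bf a d + s * Bf b c + s * t * Bf b d := by
    intro a b c d s t
    simp only [map_add, map_smul, LinearMap.add_apply, LinearMap.smul_apply, smul_eq_mul]
    ring
  have hr : ∀ a b : ↥g, starRingEnd ℂ (Bf a b) = Bf a b := fun a b =>
    Complex.conj_eq_iff_im.mpr (hs a a.2 b b.2)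
  rw [conjL_key hg, conjL_key hg, sub_eq_add_neg, sub_eq_add_neg, ← neg_smul, ← neg_smul,
    ex, ex]
  simp only [map_add, map_mul, Complex.conj_I, hr]

end CartanAux2

namespace CartanFwd
open CartanAux2

variable {g : LieSubalgebra ℝ L}

lemma bracket_decomp (g : LieSubalgebra ℝ L) (a b a' b' : ↥g) :
    (⁅(a:L) + Complex.I • (b:L), (a':L) + Complex.I • (b':L)⁆ : L)
    = ((⁅a, a'⁆ - ⁅b, b'⁆ : ↥g) : L) + Complex.I • ((⁅a, b'⁆ + ⁅b, a'⁆ : ↥g) : L) := by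
  push_cast
  simp only [add_lie, lie_add, smul_lie, lie_smul, smul_smul, Complex.I_mul_I,
    neg_one_smul, smul_add]
  abel

/-- The compact real form `k ⊕ i p` associated to a Cartan involution `θ` of `g`. -/
noncomputable def thetaForm (g : LieSubalgebra ℝ L) (θ : ↥g →ₗ[ℝ] ↥g)
    (hθbr : ∀ x y : ↥g, θ ⁅x, y⁆ = ⁅θ x, θ y⁆) : LieSubalgebra ℝ L where
  carrier := {z | ∃ a b : ↥g, θ a = a ∧ θ b = -b ∧ z = (a : L) + Complex.I • (b : L)}
  zero_mem' := ⟨0, 0, by simp, by simp, by simp⟩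
  add_mem' := by
    rintro z w ⟨a, b, ha, hb, rfl⟩ ⟨c, d, hc, hd, rfl⟩
    refine ⟨a + c, b + d, by rw [map_add, ha, hc], by rw [map_add, hb, hd]; abel, ?_⟩
    push_cast
    rw [smul_add]
    abel
  smul_mem' := by
    rintro r z ⟨a, b, ha, hb, rfl⟩
    refine ⟨r • a, r • b, by rw [map_smul, ha], by rw [map_smul, hb, smul_neg], ?_⟩
    have h2 : ((r • a : ↥g) : L) = r • (a : L) := rfl
    have h3 : ((r • b : ↥g) : L) = r • (b : L) := rfl
    rw [h2, h3, smul_add, smul_comm r Complex.I]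
  lie_mem' := by
    rintro z w ⟨a, b, ha, hb, rfl⟩ ⟨c, d, hc, hd, rfl⟩
    refine ⟨⁅a, c⁆ - ⁅b, d⁆, ⁅a, d⁆ + ⁅b, c⁆, ?_, ?_, bracket_decomp g a b c d⟩
    · rw [map_sub, hθbr, hθbr, ha, hb, hc, hd, lie_neg, neg_lie, neg_neg]
    · rw [map_add, hθbr, hθbr, ha, hb, hc, hd, lie_neg, neg_lie, neg_add]

lemma mem_thetaForm {θ : ↥g →ₗ[ℝ] ↥g} {hθbr : ∀ x y : ↥g, θ ⁅x, y⁆ = ⁅θ x, θ y⁆} {z : L} :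
    z ∈ thetaForm g θ hθbr ↔
      ∃ a b : ↥g, θ a = a ∧ θ b = -b ∧ z = (a : L) + Complex.I • (b : L) := Iff.rfl

theorem thetaForm_isCompact (B : LinearMap.BilinForm ℂ L) (hBsymm : ∀ x y : L, B x y = B y x)
    (hg : IsRealSlice B g) (θ : ↥g →ₗ[ℝ] ↥g)
    (hθ : IsCartanInvolutionOfLieAlgebras B g θ) :
    IsCompactRealForm B (thetaForm g θ hθ.2) := by
  obtain ⟨⟨hθinv, hθsym, hθpos⟩, hθbr⟩ := hθ
  -- k ⟂ p
  have kperp : ∀ a b : ↥g, θ a = a → θ b = -b → B (a : L) (b : L) = 0 := by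
    intro a b ha hb
    have h1 := hθsym a b
    rw [ha, hb] at h1
    have h2 : ((-b : ↥g) : L) = -(b : L) := by norm_cast
    rw [h2, map_neg] at h1
    have h3 : (2 : ℂ) * B (a : L) (b : L) = 0 := by linear_combination h1
    simpa using h3
  have kpos : ∀ a : ↥g, θ a = a → a ≠ 0 → 0 < (B (a : L) (a : L)).re := by
    intro a ha h0
    have := hθpos a h0
    rwa [ha] at this
  have ppos : ∀ b : ↥g, θ b = -b → b ≠ 0 → 0 < (-(B (b : L) (b : L))).re := by
    intro b hb h0
    have h1 := hθpos b h0
    rw [hb] at h1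
    have h2 : ((-b : ↥g) : L) = -(b : L) := by norm_cast
    rw [h2, map_neg] at h1
    simpa using h1
  refine ⟨⟨⟨?_, ?_⟩, ?_⟩, ?_⟩
  · -- u ∩ i u = 0
    rintro z hz w hw hzw
    rcases mem_thetaForm.mp hz with ⟨a, b, ha, hb, rfl⟩
    rcases mem_thetaForm.mp hw with ⟨c, d, hc, hd, rfl⟩
    have key : ((a + d : ↥g) : L) = Complex.I • ((c - b : ↥g) : L) := by
      push_cast
      rw [smul_sub]
      have : (a : L) + Complex.I • (b : L)
          = Complex.I • (c : L) + Complex.I • Complex.I • (d : L) := by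
        rw [← smul_add]; exact hzw
      rw [smul_smul, Complex.I_mul_I, neg_one_smul] at this
      linear_combination (norm := module) this
    have h0 : ((a + d : ↥g) : L) = 0 := hg.1.1 _ (a + d).2 _ (c - b).2 key
    have had : a + d = 0 := by exact_mod_cast Subtype.ext h0
    have hcb : c = b := by
      have h1 : Complex.I • ((c - b : ↥g) : L) = 0 := by rw [← key, h0]
      have h2 : ((c - b : ↥g) : L) = 0 := by
        simpa [Complex.I_ne_zero] using smul_eq_zero.mp h1
      have : c - b = 0 := by exact_mod_cast Subtype.ext h2
      exact sub_eq_zero.mp this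
    have half0 : ∀ v : ↥g, v = -v → v = 0 := by
      intro v h
      have h2 : (2 : ℝ) • v = 0 := by
        rw [two_smul]
        nth_rewrite 2 [h]
        exact add_neg_cancel v
      simpa using smul_eq_zero.mp h2
    have had' : a = -d := eq_neg_of_add_eq_zero_left had
    have haeqd : a = d := by
      have h1 : θ a = d := by rw [had', map_neg, hd, neg_neg]
      rw [← ha, h1]
    have hd0 : d = 0 := by
      apply half0
      nth_rewrite 1 [← haeqd]
      exact had'
    have ha0 : a = 0 := by rw [haeqd, hd0]
    have hb0 : b = 0 := by
      apply half0
      rw [← hb, ← hcb, hc]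
    rw [ha0, hb0]
    simp
  · -- u + i u = L
    intro z
    obtain ⟨x, y, rfl⟩ := exists_decomp hg.1 z
    set xp : ↥g := (1/2 : ℝ) • (x + θ x) with hxp
    set xm : ↥g := (1/2 : ℝ) • (x - θ x) with hxm
    set yp : ↥g := (1/2 : ℝ) • (y + θ y) with hyp
    set ym : ↥g := (1/2 : ℝ) • (y - θ y) with hym
    have hθxp : θ xp = xp := by rw [hxp, map_smul, map_add, hθinv]; congr 1; abel
    have hθxm : θ xm = -xm := by
      rw [hxm, map_smul, map_sub, hθinv, ← smul_neg]; congr 1; abel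
    have hθyp : θ yp = yp := by rw [hyp, map_smul, map_add, hθinv]; congr 1; abel
    have hθym : θ ym = -ym := by
      rw [hym, map_smul, map_sub, hθinv, ← smul_neg]; congr 1; abel
    have hxsum : xp + xm = x := by
      rw [hxp, hxm, ← smul_add, show (x + θ x) + (x - θ x) = (2:ℝ) • x by
        rw [two_smul]; abel, smul_smul]
      norm_num
    have hysum : yp + ym = y := by
      rw [hyp, hym, ← smul_add, show (y + θ y) + (y - θ y) = (2:ℝ) • y by
        rw [two_smul]; abel, smul_smul]
      norm_num
    refine ⟨(xp : L) + Complex.I • (ym : L), ⟨xp, ym, hθxp, hθym, rfl⟩,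
      (yp : L) + Complex.I • ((-xm : ↥g) : L), ⟨yp, -xm, hθyp, by rw [map_neg, hθxm, neg_neg], rfl⟩, ?_⟩
    have hx : (x : L) = (xp : L) + (xm : L) := by exact_mod_cast hxsum.symm
    have hy : (y : L) = (yp : L) + (ym : L) := by exact_mod_cast hysum.symm
    rw [hx, hy]
    push_cast
    simp only [smul_add, smul_smul, Complex.I_mul_I, neg_one_smul, smul_neg, neg_neg]
    abel
  · -- B is real on u
    rintro z hz w hw
    rcases mem_thetaForm.mp hz with ⟨a, b, ha, hb, rfl⟩
    rcases mem_thetaForm.mp hw with ⟨c, d, hc, hd, rfl⟩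
    have ex : ∀ (p q r s : L), B (p + Complex.I • q) (r + Complex.I • s)
        = B p r + Complex.I * B p s + Complex.I * B q r
          + Complex.I * Complex.I * B q s := by
      intro p q r s
      simp only [map_add, map_smul, LinearMap.add_apply, LinearMap.smul_apply, smul_eq_mul]
      ring
    rw [ex, kperp a d ha hd, hBsymm (b : L) (c : L), kperp c b hc hb]
    simp [Complex.ext_iff, hg.2 _ a.2 _ c.2, hg.2 _ b.2 _ d.2]
  · -- positive definiteness on u
    rintro z hz hz0
    rcases mem_thetaForm.mp hz with ⟨a, b, ha, hb, rfl⟩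
    have ex : ∀ (p q r s : L), B (p + Complex.I • q) (r + Complex.I • s)
        = B p r + Complex.I * B p s + Complex.I * B q r
          + Complex.I * Complex.I * B q s := by
      intro p q r s
      simp only [map_add, map_smul, LinearMap.add_apply, LinearMap.smul_apply, smul_eq_mul]
      ring
    rw [ex, kperp a b ha hb, hBsymm (b : L) (a : L), kperp a b ha hb]
    have hsum : (B (a:L) (a:L) + Complex.I * 0 + Complex.I * 0
        + Complex.I * Complex.I * B (b:L) (b:L)).re
        = (B (a:L) (a:L)).re + (-(B (b:L) (b:L))).re := by
      simp [Complex.ext_iff]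
    rw [hsum]
    have hab0 : a ≠ 0 ∨ b ≠ 0 := by
      by_contra h
      push_neg at h
      apply hz0
      rw [h.1, h.2]
      simp
    by_cases ha0 : a = 0 <;> by_cases hb0 : b = 0
    · exact absurd ha0 (by tauto)
    · have := ppos b hb hb0
      simp only [ha0]
      simpa using this
    · have := kpos a ha ha0
      simp only [hb0]
      simpa using this
    · have h1 := kpos a ha ha0
      have h2 := ppos b hb hb0
      linarith

end CartanFwd

namespace CartanBwd
open CartanAux2

lemma rsign_mul (a b : ℝ) : Real.sign (a * b) = Real.sign a * Real.sign b := by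
  rcases lt_trichotomy a 0 with ha|ha|ha
  · rcases lt_trichotomy b 0 with hb|hb|hb
    · rw [Real.sign_of_pos (mul_pos_of_neg_of_neg ha hb), Real.sign_of_neg ha,
        Real.sign_of_neg hb]; norm_num
    · rw [hb]; simp
    · rw [Real.sign_of_neg (mul_neg_of_neg_of_pos ha hb), Real.sign_of_neg ha,
        Real.sign_of_pos hb]; norm_num
  · rw [ha]; simp
  · rcases lt_trichotomy b 0 with hb|hb|hb
    · rw [Real.sign_of_neg (mul_neg_of_pos_of_neg ha hb), Real.sign_of_pos ha,
        Real.sign_of_neg hb]; norm_num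
    · rw [hb]; simp
    · rw [Real.sign_of_pos (mul_pos ha hb), Real.sign_of_pos ha,
        Real.sign_of_pos hb]; norm_num

lemma rsign_inv (a : ℝ) : Real.sign a⁻¹ = Real.sign a := by
  rcases lt_trichotomy a 0 with ha|ha|ha
  · rw [Real.sign_of_neg (inv_neg''.mpr ha), Real.sign_of_neg ha]
  · simp [ha]
  · rw [Real.sign_of_pos (inv_pos.mpr ha), Real.sign_of_pos ha]

lemma rsign_sq {a : ℝ} (h : a ≠ 0) : Real.sign a * Real.sign a = 1 := by
  rcases h.lt_or_gt with ha|ha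
  · rw [Real.sign_of_neg ha]; norm_num
  · rw [Real.sign_of_pos ha]; norm_num

lemma rsign_inv_mul_pos {a : ℝ} (h : a ≠ 0) : 0 < a⁻¹ * Real.sign a := by
  rcases h.lt_or_gt with ha|ha
  · rw [Real.sign_of_neg ha]
    have : a⁻¹ < 0 := inv_neg''.mpr ha
    nlinarith
  · rw [Real.sign_of_pos ha]
    have : 0 < a⁻¹ := inv_pos.mpr ha
    nlinarith

theorem exists_theta [FiniteDimensional ℂ L] (B : LinearMap.BilinForm ℂ L)
    (hBsymm : ∀ x y : L, B x y = B y x) (g : LieSubalgebra ℝ L) (hg : IsRealSlice B g)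
    (u : LieSubalgebra ℝ L) (hu : IsCompactRealForm B u) :
    ∃ θ : ↥g →ₗ[ℝ] ↥g, IsCartanInvolutionOfLieAlgebras B g θ := by
  obtain ⟨hgf, hgreal⟩ := hg
  obtain ⟨⟨huf, hureal⟩, hupos⟩ := hu
  -- conjugations
  set σ : L →ₗ[ℝ] L := conjL g hgf with hσdef
  set τ : L →ₗ[ℝ] L := conjL u huf with hτdef
  -- expansion lemma for B
  have ex : ∀ (p q r s : L) (c d : ℂ), B (p + c • q) (r + d • s)
      = B p r + d * B p s + c * B q r + c * d * B q s := by
    intro p q r s c d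
    simp only [map_add, map_smul, LinearMap.add_apply, LinearMap.smul_apply, smul_eq_mul]
    ring
  -- positivity of x ↦ B (τ x) x
  have posxx : ∀ x : L, 0 ≤ (B (τ x) x).re ∧ (B (τ x) x).im = 0 ∧ (B (τ x) x = 0 → x = 0) := by
    intro x
    obtain ⟨a, b, rfl⟩ := exists_decomp huf x
    have hτx : τ ((a : L) + Complex.I • (b : L)) = (a : L) - Complex.I • (b : L) :=
      conjL_key huf a b
    have hxx : B (τ ((a : L) + Complex.I • (b : L))) ((a : L) + Complex.I • (b : L))
        = B (a : L) (a : L) + B (b : L) (b : L) := by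
      rw [hτx, sub_eq_add_neg, ← neg_smul, ex, hBsymm (b : L) (a : L)]
      have hI : Complex.I * Complex.I = -1 := Complex.I_mul_I
      linear_combination (-(B (b : L) (b : L))) * hI
    rw [hxx]
    have haa : 0 ≤ (B (a : L) (a : L)).re ∧ ((a : L) ≠ 0 → 0 < (B (a : L) (a : L)).re) := by
      by_cases h : (a : L) = 0
      · simp [h]
      · exact ⟨le_of_lt (hupos _ a.2 h), fun _ => hupos _ a.2 h⟩
    have hbb : 0 ≤ (B (b : L) (b : L)).re ∧ ((b : L) ≠ 0 → 0 < (B (b : L) (b : L)).re) := by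
      by_cases h : (b : L) = 0
      · simp [h]
      · exact ⟨le_of_lt (hupos _ b.2 h), fun _ => hupos _ b.2 h⟩
    refine ⟨by simp [Complex.add_re]; linarith [haa.1, hbb.1], ?_, ?_⟩
    · simp [Complex.add_im, hureal _ a.2 _ a.2, hureal _ b.2 _ b.2]
    · intro h0
      have hre : (B (a : L) (a : L)).re + (B (b : L) (b : L)).re = 0 := by
        have := congrArg Complex.re h0
        simpa [Complex.add_re] using this
      have ha0 : (a : L) = 0 := by
        by_contra h
        have := haa.2 h
        linarith [hbb.1]
      have hb0 : (b : L) = 0 := by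
        by_contra h
        have := hbb.2 h
        linarith [haa.1]
      rw [ha0, hb0]
      simp
  -- the inner product space structure
  have conjτ : ∀ z w, B (τ z) (τ w) = starRingEnd ℂ (B z w) := fun z w =>
    conjL_conjB B hureal huf z w
  have conjσ : ∀ z w, B (σ z) (σ w) = starRingEnd ℂ (B z w) := fun z w =>
    conjL_conjB B hgreal hgf z w
  have ruleτ : ∀ z w, B (τ z) w = starRingEnd ℂ (B z (τ w)) := by
    intro z w
    conv_lhs => rw [show w = τ (τ w) from (conjL_invol huf w).symm]
    exact conjτ z (τ w)
  have ruleσ : ∀ z w, B (σ z) w = starRingEnd ℂ (B z (σ w)) := by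
    intro z w
    conv_lhs => rw [show w = σ (σ w) from (conjL_invol hgf w).symm]
    exact conjσ z (σ w)
  letI core : InnerProductSpace.Core ℂ L :=
    { inner := fun x y => B (τ x) y
      conj_inner_symm := by
        intro x y
        show starRingEnd ℂ (B (τ y) x) = B (τ x) y
        rw [ruleτ y x, Complex.conj_conj, hBsymm]
      re_inner_nonneg := fun x => (posxx x).1
      definite := fun x h => (posxx x).2.2 h
      add_left := by
        intro x y z
        show B (τ (x + y)) z = B (τ x) z + B (τ y) z
        rw [map_add, map_add, LinearMap.add_apply]
      smul_left := by
        intro x y r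
        show B (τ (r • x)) y = starRingEnd ℂ r * B (τ x) y
        rw [conjL_smul huf r x, map_smul, LinearMap.smul_apply, smul_eq_mul] }
  letI : NormedAddCommGroup L := @InnerProductSpace.Core.toNormedAddCommGroup ℂ L _ _ _ core
  letI : InnerProductSpace ℂ L := InnerProductSpace.ofCore core.toCore
  have inner_def : ∀ x y : L, (inner ℂ x y : ℂ) = B (τ x) y := fun x y => rfl
  -- the operator N = σ ∘ τ
  let N : L →ₗ[ℂ] L :=
    { toFun := fun z => σ (τ z)
      map_add' := by
        intro x y
        show σ (τ (x + y)) = σ (τ x) + σ (τ y)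
        rw [map_add, map_add]
      map_smul' := by
        intro c z
        show σ (τ (c • z)) = c • σ (τ z)
        rw [hτdef, conjL_smul huf c z, hσdef, conjL_smul hgf _ _, Complex.conj_conj] }
  have hNapp : ∀ z, N z = σ (τ z) := fun z => rfl
  let Ninv : L →ₗ[ℂ] L :=
    { toFun := fun z => τ (σ z)
      map_add' := by
        intro x y
        show τ (σ (x + y)) = τ (σ x) + τ (σ y)
        rw [map_add, map_add]
      map_smul' := by
        intro c z
        show τ (σ (c • z)) = c • τ (σ z)
        rw [hσdef, conjL_smul hgf c z, hτdef, conjL_smul huf _ _, Complex.conj_conj] }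
  have hNinvN : ∀ z, Ninv (N z) = z := by
    intro z
    show τ (σ (σ (τ z))) = z
    rw [conjL_invol hgf, conjL_invol huf]
  have hNNinv : ∀ z, N (Ninv z) = z := by
    intro z
    show σ (τ (τ (σ z))) = z
    rw [conjL_invol huf, conjL_invol hgf]
  have hNsym : N.IsSymmetric := by
    intro x y
    rw [inner_def, inner_def]
    show B (τ (σ (τ x))) y = B (τ x) (σ (τ y))
    rw [ruleτ (σ (τ x)) y, ruleσ (τ x) (τ y), Complex.conj_conj]
  -- the eigenvector basis of N
  have hdim : Module.finrank ℂ L = Module.finrank ℂ L := rfl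
  set bON := hNsym.eigenvectorBasis hdim with hbON
  set μ := hNsym.eigenvalues hdim with hμdef
  have hNb : ∀ i, N (bON i) = ((μ i : ℝ) : ℂ) • bON i := fun i =>
    hNsym.apply_eigenvectorBasis hdim i
  have hbne : ∀ i, bON i ≠ 0 := fun i => bON.orthonormal.ne_zero i
  have hμne : ∀ i, μ i ≠ 0 := by
    intro i h0
    apply hbne i
    have h1 : N (bON i) = 0 := by rw [hNb i, h0]; simp
    have h2 := hNinvN (bON i)
    rw [h1, map_zero] at h2
    exact h2.symm
  have hcoeff : ∀ (v : L) i, bON.repr (N v) i = (μ i : ℂ) * bON.repr v i := fun v i =>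
    hNsym.eigenvectorBasis_apply_self_apply hdim v i
  -- the sign operator S
  let S : L →ₗ[ℂ] L := bON.toBasis.constr ℂ fun i => ((Real.sign (μ i) : ℝ) : ℂ) • bON i
  have hSb : ∀ i, S (bON i) = ((Real.sign (μ i) : ℝ) : ℂ) • bON i := by
    intro i
    have h := bON.toBasis.constr_basis ℂ (fun i => ((Real.sign (μ i) : ℝ) : ℂ) • bON i) i
    have e : bON.toBasis i = bON i := congrFun (bON.coe_toBasis) i
    rw [e] at h
    exact h
  have Seigen : ∀ (c : ℝ) (x : L), N x = ((c : ℝ) : ℂ) • x →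
      S x = ((Real.sign c : ℝ) : ℂ) • x := by
    intro c x hx
    have hr : ∀ i, (μ i : ℂ) * bON.repr x i = (c : ℂ) * bON.repr x i := by
      intro i
      rw [← hcoeff x i, hx, map_smul]
      rfl
    have e1 : S x = ∑ i, bON.repr x i • S (bON i) := by
      conv_lhs => rw [← bON.sum_repr x]
      rw [map_sum]
      exact Finset.sum_congr rfl fun i _ => by beta_reduce; rw [map_smul]
    rw [e1]
    have e2 : ((Real.sign c : ℝ) : ℂ) • x
        = ∑ i, ((Real.sign c : ℝ) : ℂ) • (bON.repr x i • bON i) := by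
      rw [← Finset.smul_sum, bON.sum_repr]
    rw [e2]
    refine Finset.sum_congr rfl fun i _ => ?_
    rw [hSb i]
    by_cases h0 : bON.repr x i = 0
    · simp [h0]
    · have hc1 : (μ i : ℂ) = (c : ℂ) := mul_left_cancel₀ h0 (by linear_combination hr i)
      have hc2 : μ i = c := by exact_mod_cast hc1
      rw [smul_comm, hc2]
  have etoB : ∀ i, bON.toBasis i = bON i := fun i => congrFun (bON.coe_toBasis) i
  have σreal : ∀ (a : ℝ) (w : L), σ (((a : ℝ) : ℂ) • w) = ((a : ℝ) : ℂ) • σ w := by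
    intro a w
    rw [hσdef, conjL_smul hgf, Complex.conj_ofReal]
  have heig : ∀ (i : Fin (Module.finrank ℂ L)) (r : ℂ),
      N (r • bON i) = ((μ i : ℝ) : ℂ) • (r • bON i) := by
    intro i r
    rw [map_smul, hNb i, smul_comm]
  have hNinvb : ∀ (i : Fin (Module.finrank ℂ L)) (r : ℂ),
      Ninv (r • bON i) = (((μ i)⁻¹ : ℝ) : ℂ) • (r • bON i) := by
    intro i r
    have h1 : Ninv (N (r • bON i)) = r • bON i := hNinvN _
    rw [heig i r, map_smul] at h1
    have h2 : (((μ i)⁻¹ : ℝ) : ℂ) • (((μ i : ℝ) : ℂ) • Ninv (r • bON i))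
        = (((μ i)⁻¹ : ℝ) : ℂ) • (r • bON i) := by rw [h1]
    rw [smul_smul] at h2
    have h3 : ((((μ i)⁻¹ : ℝ) : ℂ) * ((μ i : ℝ) : ℂ)) = 1 := by
      rw [← Complex.ofReal_mul, inv_mul_cancel₀ (hμne i)]
      norm_num
    rwa [h3, one_smul] at h2
  -- S is an involution
  have S_invol : ∀ z, S (S z) = z := by
    have h : S ∘ₗ S = LinearMap.id := by
      apply bON.toBasis.ext
      intro i
      rw [LinearMap.comp_apply, LinearMap.id_apply, etoB i, hSb i, map_smul, hSb i,
        smul_smul, ← Complex.ofReal_mul, rsign_sq (hμne i)]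
      norm_num
    intro z
    exact LinearMap.congr_fun h z
  -- S commutes with σ
  have hσb : ∀ (i : Fin (Module.finrank ℂ L)) (r : ℂ),
      S (σ (r • bON i)) = σ (S (r • bON i)) := by
    intro i r
    have hNσ : N (σ (r • bON i)) = (((μ i)⁻¹ : ℝ) : ℂ) • σ (r • bON i) := by
      show σ (τ (σ (r • bON i))) = _
      have h1 : τ (σ (r • bON i)) = Ninv (r • bON i) := rfl
      rw [h1, hNinvb i r, σreal]
    rw [Seigen _ _ hNσ, rsign_inv, Seigen _ _ (heig i r), σreal]
  have S_comm_σ : ∀ z, S (σ z) = σ (S z) := by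
    intro z
    conv_lhs => rw [← bON.sum_repr z]
    conv_rhs => rw [← bON.sum_repr z]
    rw [map_sum, map_sum, map_sum, map_sum]
    exact Finset.sum_congr rfl fun i _ => hσb i _
  -- S respects the bracket
  have N_bracket : ∀ z w, N ⁅z, w⁆ = ⁅N z, N w⁆ := by
    intro z w
    show σ (τ ⁅z, w⁆) = ⁅σ (τ z), σ (τ w)⁆
    rw [hτdef, conjL_bracket huf, hσdef, conjL_bracket hgf]
  have hbr : ∀ i j, S ⁅bON i, bON j⁆ = ⁅S (bON i), S (bON j)⁆ := by
    intro i j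
    have h1 : N ⁅bON i, bON j⁆ = ((μ i * μ j : ℝ) : ℂ) • ⁅bON i, bON j⁆ := by
      rw [N_bracket, hNb i, hNb j, smul_lie, lie_smul, smul_smul, ← Complex.ofReal_mul]
    rw [Seigen _ _ h1, hSb i, hSb j, smul_lie, lie_smul, smul_smul, rsign_mul,
      ← Complex.ofReal_mul]
  have S_bracket : ∀ z w, S ⁅z, w⁆ = ⁅S z, S w⁆ := by
    let F : L →ₗ[ℂ] L →ₗ[ℂ] L := LinearMap.mk₂ ℂ (fun z w => S ⁅z, w⁆)
      (fun a b c => by beta_reduce; rw [add_lie, map_add]) (fun r a b => by beta_reduce; rw [smul_lie, map_smul])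
      (fun a b c => by beta_reduce; rw [lie_add, map_add]) (fun r a b => by beta_reduce; rw [lie_smul, map_smul])
    let G : L →ₗ[ℂ] L →ₗ[ℂ] L := LinearMap.mk₂ ℂ (fun z w => ⁅S z, S w⁆)
      (fun a b c => by beta_reduce; rw [map_add, add_lie]) (fun r a b => by beta_reduce; rw [map_smul, smul_lie])
      (fun a b c => by beta_reduce; rw [map_add, lie_add]) (fun r a b => by beta_reduce; rw [map_smul, lie_smul])
    have hFG : F = G := by
      apply LinearMap.ext_basis bON.toBasis bON.toBasis
      intro i j
      show S ⁅bON.toBasis i, bON.toBasis j⁆ = ⁅S (bON.toBasis i), S (bON.toBasis j)⁆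
      rw [etoB i, etoB j]
      exact hbr i j
    intro z w
    exact LinearMap.congr_fun (LinearMap.congr_fun hFG z) w
  -- S preserves B
  have BNN : ∀ z w, B (N z) (N w) = B z w := by
    intro z w
    show B (σ (τ z)) (σ (τ w)) = B z w
    rw [conjσ, conjτ, Complex.conj_conj]
  have hBb : ∀ i j, B (S (bON i)) (S (bON j)) = B (bON i) (bON j) := by
    intro i j
    rw [hSb i, hSb j]
    simp only [map_smul, LinearMap.smul_apply, smul_eq_mul]
    by_cases h1 : μ i * μ j = 1
    · have h2 : Real.sign (μ i) * Real.sign (μ j) = 1 := by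
        rw [← rsign_mul, h1, Real.sign_one]
      have : (((Real.sign (μ i) : ℝ) : ℂ)) * ((Real.sign (μ j) : ℝ) : ℂ) = 1 := by
        rw [← Complex.ofReal_mul, h2]
        norm_num
      linear_combination (B (bON i) (bON j)) * this
    · have h2 := BNN (bON i) (bON j)
      rw [hNb i, hNb j] at h2
      simp only [map_smul, LinearMap.smul_apply, smul_eq_mul] at h2
      have h3 : B (bON i) (bON j) = 0 := by
        by_contra h4
        apply h1
        have h5 : ((μ i : ℝ) : ℂ) * ((μ j : ℝ) : ℂ) = 1 :=
          mul_right_cancel₀ h4 (by linear_combination h2)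
        exact_mod_cast h5
      rw [h3]
      ring
  have S_B : ∀ z w, B (S z) (S w) = B z w := by
    let F : L →ₗ[ℂ] L →ₗ[ℂ] ℂ := LinearMap.mk₂ ℂ (fun z w => B (S z) (S w))
      (fun a b c => by beta_reduce; rw [map_add, map_add, LinearMap.add_apply])
      (fun r a b => by beta_reduce; rw [map_smul, map_smul, LinearMap.smul_apply])
      (fun a b c => by beta_reduce; rw [map_add, map_add])
      (fun r a b => by beta_reduce; rw [map_smul, map_smul])
    have hFB : F = B := by
      apply LinearMap.ext_basis bON.toBasis bON.toBasis
      intro i j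
      show B (S (bON.toBasis i)) (S (bON.toBasis j)) = B (bON.toBasis i) (bON.toBasis j)
      rw [etoB i, etoB j]
      exact hBb i j
    intro z w
    exact LinearMap.congr_fun (LinearMap.congr_fun hFB z) w
  -- positivity of B x (S x) for x in g
  have Spos : ∀ x : L, σ x = x → x ≠ 0 → 0 < (B x (S x)).re := by
    intro x hσx hx0
    have hτx : τ x = Ninv x := by
      conv_lhs => rw [← hσx]
      rfl
    have hBS : B x (S x) = (inner ℂ (τ x) (S x) : ℂ) := by
      rw [inner_def, conjL_invol huf]
    set r : Fin (Module.finrank ℂ L) → ℂ := fun i => bON.repr x i with hrdef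
    have hx : x = ∑ i, r i • bON i := (bON.sum_repr x).symm
    have hNinvx : Ninv x = ∑ i, ((((μ i)⁻¹ : ℝ) : ℂ) * r i) • bON i := by
      conv_lhs => rw [hx]
      rw [map_sum]
      exact Finset.sum_congr rfl fun i _ => by beta_reduce; rw [hNinvb i (r i), smul_smul]
    have hSx : S x = ∑ i, (((Real.sign (μ i) : ℝ) : ℂ) * r i) • bON i := by
      conv_lhs => rw [hx]
      rw [map_sum]
      refine Finset.sum_congr rfl fun i _ => ?_
      rw [map_smul, hSb i, smul_smul, mul_comm]
    have key := bON.orthonormal.inner_sum (fun i => (((μ i)⁻¹ : ℝ) : ℂ) * r i)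
      (fun i => ((Real.sign (μ i) : ℝ) : ℂ) * r i) Finset.univ
    have hfin : B x (S x) = ∑ i, (starRingEnd ℂ) ((((μ i)⁻¹ : ℝ) : ℂ) * r i)
        * (((Real.sign (μ i) : ℝ) : ℂ) * r i) := by
      rw [hBS, hτx, hNinvx, hSx]
      exact key
    have hterm : ∀ i, ((starRingEnd ℂ) ((((μ i)⁻¹ : ℝ) : ℂ) * r i)
        * (((Real.sign (μ i) : ℝ) : ℂ) * r i)).re
        = ((μ i)⁻¹ * Real.sign (μ i)) * Complex.normSq (r i) := by
      intro i
      rw [map_mul, Complex.conj_ofReal]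
      have : ((((μ i)⁻¹ : ℝ) : ℂ) * (starRingEnd ℂ) (r i))
          * (((Real.sign (μ i) : ℝ) : ℂ) * r i)
          = ((((μ i)⁻¹ * Real.sign (μ i) : ℝ)) : ℂ) * ((Complex.normSq (r i) : ℝ) : ℂ) := by
        rw [Complex.ofReal_mul]
        have hc : (starRingEnd ℂ) (r i) * r i = ((Complex.normSq (r i) : ℝ) : ℂ) := by
          rw [mul_comm, Complex.mul_conj]
        linear_combination ((((μ i)⁻¹ : ℝ) : ℂ) * ((Real.sign (μ i) : ℝ) : ℂ)) * hc
      rw [this, ← Complex.ofReal_mul]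
      exact Complex.ofReal_re _
    have hre : (B x (S x)).re = ∑ i, ((μ i)⁻¹ * Real.sign (μ i)) * Complex.normSq (r i) := by
      rw [hfin, Complex.re_sum]
      exact Finset.sum_congr rfl fun i _ => hterm i
    rw [hre]
    have hnonneg : ∀ i ∈ Finset.univ, 0 ≤ ((μ i)⁻¹ * Real.sign (μ i)) * Complex.normSq (r i) :=
      fun i _ => mul_nonneg (le_of_lt (rsign_inv_mul_pos (hμne i))) (Complex.normSq_nonneg _)
    have hex : ∃ i ∈ Finset.univ, 0 < ((μ i)⁻¹ * Real.sign (μ i)) * Complex.normSq (r i) := by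
      have : ∃ i, r i ≠ 0 := by
        by_contra hall
        push_neg at hall
        apply hx0
        rw [hx]
        exact Finset.sum_eq_zero fun i _ => by beta_reduce; rw [hall i, zero_smul]
      obtain ⟨i, hi⟩ := this
      exact ⟨i, Finset.mem_univ i,
        mul_pos (rsign_inv_mul_pos (hμne i)) (Complex.normSq_pos.mpr hi)⟩
    obtain ⟨i, hiu, hipos⟩ := hex
    exact Finset.sum_pos' hnonneg ⟨i, hiu, hipos⟩
  -- S preserves g
  have hSg : ∀ x : L, x ∈ g → S x ∈ g := by
    intro x hx
    apply conjL_fix hgf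
    show σ (S x) = S x
    rw [← S_comm_σ, hσdef, conjL_mem hgf hx]
  -- the Cartan involution θ
  let θ : ↥g →ₗ[ℝ] ↥g :=
    { toFun := fun x => ⟨S x, hSg x x.2⟩
      map_add' := by
        intro x y
        apply Subtype.ext
        push_cast
        rw [map_add]
      map_smul' := by
        intro c x
        apply Subtype.ext
        push_cast
        show S ((c : ℝ) • (x : L)) = c • S (x : L)
        rw [← real_smul_eq, map_smul, real_smul_eq] }
  have hθapp : ∀ x : ↥g, ((θ x : ↥g) : L) = S (x : L) := fun x => rfl
  refine ⟨θ, ⟨⟨?_, ?_, ?_⟩, ?_⟩⟩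
  · intro x
    apply Subtype.ext
    rw [hθapp, hθapp, S_invol]
  · intro x y
    rw [hθapp, hθapp]
    conv_lhs => rw [show (y : L) = S (S (y : L)) from (S_invol _).symm]
    rw [S_B]
  · intro x hx
    rw [hθapp]
    apply Spos (x : L) (conjL_mem hgf x.2)
    intro h
    exact hx (Subtype.ext h)
  · intro x y
    apply Subtype.ext
    exact S_bracket (x : L) (y : L)

end CartanBwd

/-- If `g` is a real slice of `(L, B)`, then there exists a Cartan involution
of Lie algebras of `B|g` if and only if there exists a compact real form of `(L, B)`. -/
theorem exists_cartanInvolution_iff_exists_compactRealForm [FiniteDimensional ℂ L]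
    (B : LinearMap.BilinForm ℂ L) (hBsymm : ∀ x y : L, B x y = B y x)
    (hBnd : B.Nondegenerate) (g : LieSubalgebra ℝ L) (hg : IsRealSlice B g) :
    (∃ θ : ↥g →ₗ[ℝ] ↥g, IsCartanInvolutionOfLieAlgebras B g θ) ↔
      ∃ u : LieSubalgebra ℝ L, IsCompactRealForm B u := by
  constructor
  · rintro ⟨θ, hθ⟩
    exact ⟨_, CartanFwd.thetaForm_isCompact B hBsymm hg θ hθ⟩
  · rintro ⟨u, hu⟩
    exact CartanBwd.exists_theta B hBsymm g hg u hu
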